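/- arXiv:0904.1651 — 2 statements merged into one kernel-verified Lean document; each statement's English description precedes it below -/
import Mathlib

section
/- Let G be the path graph P_3 with consecutive vertices x, v_1, v_2 and weight function ω. Then for every t ≥ 1, π_t(G_ω, x) = t · ω(xv_1) · ω(v_1v_2). -/
open Finset

variable {V : Type*}

/-- Applying the pebbling move `m = (v, u)` on `G_ω`: remove `ω v u` pebbles at `v`
and add one pebble at `u`. -/
def moveFn [DecidableEq V] (ω : V → V → ℕ) (m : V × V) (p : V → ℤ) : V → ℤ :=
  fun w => if w = m.1 then p m.1 - ω m.1 m.2 else if w = m.2 then p m.2 + 1 else p w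

/-- The pebble function obtained after applying a sequence of pebbling moves. -/
def applyList [DecidableEq V] (ω : V → V → ℕ) : List (V × V) → (V → ℤ) → (V → ℤ)
  | [], p => p
  | m :: l, p => applyList ω l (moveFn ω m p)

/-- A pebbling sequence is executable from `p` if every move is along an edge of `G`
and every intermediate pebble function is nonnegative. -/
def Executable [DecidableEq V] (G : SimpleGraph V) (ω : V → V → ℕ) :
    (V → ℤ) → List (V × V) → Prop
  | _, [] => True
  | p, m :: l => G.Adj m.1 m.2 ∧ (∀ w, 0 ≤ moveFn ω m p w) ∧ Executable G ω (moveFn ω m p) l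

/-- `x` is `t`-reachable from `p` on the weighted graph `G_ω`. -/
def Reaches [DecidableEq V] (G : SimpleGraph V) (ω : V → V → ℕ) (p : V → ℤ) (x : V)
    (t : ℕ) : Prop :=
  ∃ l : List (V × V), Executable G ω p l ∧ (t : ℤ) ≤ applyList ω l p x

/-- A pebble distribution is a nonnegative pebble function. -/
def IsDistrib (p : V → ℤ) : Prop := ∀ v, 0 ≤ p v

/-- The size of a pebble distribution: the total number of pebbles. -/
def size [Fintype V] (p : V → ℤ) : ℤ := ∑ v, p v

/-- The `t`-pebbling number `π_t(G_ω, x)`: the least `m` such that `x` is `t`-reachable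
from every pebble distribution of size `m`. -/
noncomputable def piT [Fintype V] [DecidableEq V] (G : SimpleGraph V) (ω : V → V → ℕ)
    (x : V) (t : ℕ) : ℕ :=
  sInf {m : ℕ | ∀ p : V → ℤ, IsDistrib p → size p = (m : ℤ) → Reaches G ω p x t}

/-- `p_S` for a multiset `S` of pebbling moves:
`p_S(w) = p(w) + d⁻(w) − ∑ ω(w,u)` over arcs leaving `w`. -/
def applyMS [DecidableEq V] (ω : V → V → ℕ) (S : Multiset (V × V)) (p : V → ℤ) : V → ℤ :=
  fun w => p w + (Multiset.card (S.filter (fun m => m.2 = w)) : ℤ)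
    - ((S.filter (fun m => m.1 = w)).map (fun m => (ω m.1 m.2 : ℤ))).sum

/-- The transition digraph of `S` contains a directed cycle. -/
def HasCycle (S : Multiset (V × V)) : Prop :=
  ∃ l : List (V × V), l ≠ [] ∧ (l : Multiset (V × V)) ≤ S ∧
    List.Chain' (fun a b => a.2 = b.1) l ∧
    l.getLast?.map Prod.snd = l.head?.map Prod.fst

/-- A multiset of pebbling moves is acyclic if its transition digraph has no directed cycle. -/
def Acyclic (S : Multiset (V × V)) : Prop := ¬HasCycle S

/-- A list of pebbling moves is regular if each move is an initial move of the multiset of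
remaining moves: the source of each move has in-degree zero among the remaining moves. -/
def RegularSeq : List (V × V) → Prop
  | [] => True
  | m :: l => (∀ m' ∈ m :: l, m'.2 ≠ m.1) ∧ RegularSeq l

section AuxGeneral

lemma applyList_append' [DecidableEq V] (ω : V → V → ℕ) (l1 l2 : List (V × V)) (p : V → ℤ) :
    applyList ω (l1 ++ l2) p = applyList ω l2 (applyList ω l1 p) := by
  induction l1 generalizing p with
  | nil => rfl
  | cons m l ih => simp only [List.cons_append, applyList]; exact ih _

lemma exec_append' [DecidableEq V] (G : SimpleGraph V) (ω : V → V → ℕ)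
    (l1 l2 : List (V × V)) (p : V → ℤ)
    (h1 : Executable G ω p l1) (h2 : Executable G ω (applyList ω l1 p) l2) :
    Executable G ω p (l1 ++ l2) := by
  induction l1 generalizing p with
  | nil => exact h2
  | cons m l ih =>
    exact ⟨h1.1, h1.2.1, ih _ h1.2.2 (by simpa only [applyList] using h2)⟩

lemma exec_distrib' [DecidableEq V] {G : SimpleGraph V} (ω : V → V → ℕ)
    (l : List (V × V)) (p : V → ℤ) (hp : IsDistrib p)
    (hex : Executable G ω p l) : IsDistrib (applyList ω l p) := by
  induction l generalizing p with
  | nil => exact hp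
  | cons m l ih => exact ih _ hex.2.1 hex.2.2

lemma replicate_exec' [DecidableEq V] {G : SimpleGraph V} (ω : V → V → ℕ) {v u : V}
    (hadj : G.Adj v u) (n : ℕ) (p : V → ℤ) (hp : IsDistrib p)
    (hn : (n : ℤ) * ω v u ≤ p v) :
    Executable G ω p (List.replicate n (v, u)) ∧
      applyList ω (List.replicate n (v, u)) p
        = fun w => if w = v then p v - n * ω v u else if w = u then p u + n else p w := by
  induction n generalizing p with
  | zero =>
    refine ⟨trivial, ?_⟩
    funext w
    simp only [List.replicate_zero, applyList, Nat.cast_zero, zero_mul, sub_zero, add_zero]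
    split_ifs with h1 h2 <;> simp_all
  | succ n ih =>
    have hvu : v ≠ u := G.ne_of_adj hadj
    have hω1 : (0:ℤ) ≤ (ω v u : ℤ) := by positivity
    have hp'v : moveFn ω (v,u) p v = p v - ω v u := by simp [moveFn]
    have hp'u : moveFn ω (v,u) p u = p u + 1 := by simp [moveFn, Ne.symm hvu]
    have hp'w : ∀ w, w ≠ v → w ≠ u → moveFn ω (v,u) p w = p w := by
      intro w h1 h2; simp [moveFn, h1, h2]
    have hcast : ((n : ℤ) + 1) * ω v u ≤ p v := by push_cast at hn; linarith
    have hd : IsDistrib (moveFn ω (v,u) p) := by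
      intro w
      by_cases h1 : w = v
      · rw [h1, hp'v]; nlinarith [hcast, hω1, Nat.cast_nonneg (α := ℤ) n]
      by_cases h2 : w = u
      · rw [h2, hp'u]; linarith [hp u]
      · rw [hp'w w h1 h2]; exact hp w
    have hn' : (n : ℤ) * ω v u ≤ moveFn ω (v,u) p v := by rw [hp'v]; linarith [hcast]
    obtain ⟨he, ha⟩ := ih (moveFn ω (v,u) p) hd hn'
    refine ⟨⟨hadj, hd, he⟩, ?_⟩
    have hstep : applyList ω (List.replicate (n+1) (v,u)) p
        = applyList ω (List.replicate n (v,u)) (moveFn ω (v,u) p) := by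
      rw [List.replicate_succ]; rfl
    rw [hstep, ha]
    funext w
    by_cases h1 : w = v
    · subst h1
      simp only [if_pos rfl, hp'v]
      push_cast; ring
    by_cases h2 : w = u
    · subst h2
      simp only [if_neg h1, if_pos rfl, hp'u]
      push_cast; ring
    · simp only [if_neg h1, if_neg h2, hp'w w h1 h2]

lemma key_arith' (a b c A B t : ℤ) (ha : 0 ≤ a) (hb : 0 ≤ b) (hc : 0 ≤ c)
    (hA : 2 ≤ A) (hB : 2 ≤ B) (hs : a + b + c = t * A * B) :
    t ≤ a + (b + c / B) / A := by
  have hA0 : 0 < A := by linarith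
  have hB0 : 0 < B := by linarith
  have h2 : (t - a) * A - b ≤ c / B := by
    rw [Int.le_ediv_iff_mul_le hB0]
    nlinarith [mul_nonneg ha (by nlinarith : (0:ℤ) ≤ A * B - 1),
      mul_nonneg hb (by linarith : (0:ℤ) ≤ B - 1)]
  have h1 : t - a ≤ (b + c / B) / A := by
    rw [Int.le_ediv_iff_mul_le hA0]
    linarith
  linarith

end AuxGeneral

/-- The path graph `P_3` with consecutive vertices `0, 1, 2`. -/
def P3 : SimpleGraph (Fin 3) :=
  SimpleGraph.fromRel (fun a b => b.val = a.val + 1)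

section AuxP3

lemma P3_adj_iff (u v : Fin 3) : P3.Adj u v ↔ u ≠ v ∧ (v.val = u.val + 1 ∨ u.val = v.val + 1) := by
  rw [P3, SimpleGraph.fromRel_adj]

lemma P3_adj01 : P3.Adj 0 1 := by rw [P3_adj_iff]; exact ⟨by decide, by decide⟩
lemma P3_adj10 : P3.Adj 1 0 := by rw [P3_adj_iff]; exact ⟨by decide, by decide⟩
lemma P3_adj12 : P3.Adj 1 2 := by rw [P3_adj_iff]; exact ⟨by decide, by decide⟩
lemma P3_adj21 : P3.Adj 2 1 := by rw [P3_adj_iff]; exact ⟨by decide, by decide⟩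

lemma phi_step (ω : Fin 3 → Fin 3 → ℕ)
    (hsym : ∀ u v, ω u v = ω v u)
    (hω : ∀ u v, P3.Adj u v → 2 ≤ ω u v)
    (m : Fin 3 × Fin 3) (hadj : P3.Adj m.1 m.2) (p : Fin 3 → ℤ) :
    (ω 0 1 : ℤ) * ω 1 2 * moveFn ω m p 0 + (ω 1 2 : ℤ) * moveFn ω m p 1 + moveFn ω m p 2
      ≤ (ω 0 1 : ℤ) * ω 1 2 * p 0 + (ω 1 2 : ℤ) * p 1 + p 2 := by
  have hA : (2:ℤ) ≤ ω 0 1 := by exact_mod_cast hω 0 1 P3_adj01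
  have hB : (2:ℤ) ≤ ω 1 2 := by exact_mod_cast hω 1 2 P3_adj12
  have h10 : ω 1 0 = ω 0 1 := hsym 1 0
  have h21 : ω 2 1 = ω 1 2 := hsym 2 1
  have hAA : (3:ℤ) ≤ (ω 0 1 : ℤ) * ω 0 1 := by nlinarith
  have hsq1 : (0:ℤ) ≤ ((ω 0 1 : ℤ) * ω 0 1 - 1) * ω 1 2 :=
    mul_nonneg (by linarith) (by linarith)
  have hsq2 : (0:ℤ) ≤ (ω 1 2 : ℤ) * ω 1 2 - 1 := by nlinarith
  obtain ⟨x, y⟩ := m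
  simp only at hadj
  rw [P3_adj_iff] at hadj
  have hcases : (x = 0 ∧ y = 1) ∨ (x = 1 ∧ y = 0) ∨ (x = 1 ∧ y = 2) ∨ (x = 2 ∧ y = 1) := by
    obtain ⟨hne, hor⟩ := hadj
    have hx := x.isLt
    have hy := y.isLt
    simp only [Ne, Fin.ext_iff] at hne ⊢
    omega
  rcases hcases with ⟨hx, hy⟩ | ⟨hx, hy⟩ | ⟨hx, hy⟩ | ⟨hx, hy⟩ <;> subst hx <;> subst hy <;>
    simp only [moveFn, Fin.isValue, Fin.reduceEq, reduceIte, if_true, if_false] <;> norm_num <;> nlinarith [hA, hB, hsq1, hsq2]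

lemma phi_mono' (ω : Fin 3 → Fin 3 → ℕ)
    (hsym : ∀ u v, ω u v = ω v u)
    (hω : ∀ u v, P3.Adj u v → 2 ≤ ω u v)
    (l : List (Fin 3 × Fin 3)) (p : Fin 3 → ℤ)
    (hex : Executable P3 ω p l) :
    (ω 0 1 : ℤ) * ω 1 2 * applyList ω l p 0 + (ω 1 2 : ℤ) * applyList ω l p 1 + applyList ω l p 2
      ≤ (ω 0 1 : ℤ) * ω 1 2 * p 0 + (ω 1 2 : ℤ) * p 1 + p 2 := by
  induction l generalizing p with
  | nil => simp [applyList]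
  | cons m l ih =>
    obtain ⟨hadj, hnn, hex'⟩ := hex
    exact le_trans (ih _ hex') (phi_step ω hsym hω m hadj p)

end AuxP3

/-- For the weighted path `P_3` with consecutive vertices
`x = 0, v_1 = 1, v_2 = 2`: `π_t(G_ω, x) = t · ω(x v_1) · ω(v_1 v_2)` for all `t ≥ 1`. -/
theorem statement7 (ω : Fin 3 → Fin 3 → ℕ)
    (hsym : ∀ u v, ω u v = ω v u)
    (hω : ∀ u v, P3.Adj u v → 2 ≤ ω u v) :
    ∀ t : ℕ, 1 ≤ t → piT P3 ω 0 t = t * ω 0 1 * ω 1 2 := by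
  intro t ht
  have hA : (2:ℤ) ≤ (ω 0 1 : ℤ) := by exact_mod_cast hω 0 1 P3_adj01
  have hB : (2:ℤ) ≤ (ω 1 2 : ℤ) := by exact_mod_cast hω 1 2 P3_adj12
  have hA0 : (0:ℤ) < (ω 0 1 : ℤ) := by linarith
  have hB0 : (0:ℤ) < (ω 1 2 : ℤ) := by linarith
  have hmem : (t * ω 0 1 * ω 1 2) ∈
      {m : ℕ | ∀ p : Fin 3 → ℤ, IsDistrib p → size p = (m : ℤ) → Reaches P3 ω p 0 t} := by
    intro p hp hsize
    have hsum : p 0 + p 1 + p 2 = (t:ℤ) * (ω 0 1 : ℤ) * (ω 1 2 : ℤ) := by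
      rw [size, Fin.sum_univ_three] at hsize
      push_cast at hsize
      linarith
    set k : ℕ := ((p 2) / (ω 1 2 : ℤ)).toNat with hkdef
    have hk : (k:ℤ) = p 2 / (ω 1 2 : ℤ) :=
      Int.toNat_of_nonneg (Int.ediv_nonneg (hp 2) (by linarith))
    have hkB : (k:ℤ) * (ω 1 2 : ℤ) ≤ p 2 := by
      rw [hk, mul_comm]
      linarith [Int.mul_ediv_add_emod (p 2) ((ω 1 2 : ℤ)),
        Int.emod_nonneg (p 2) (by linarith : ((ω 1 2 : ℤ)) ≠ 0)]
    obtain ⟨he1, ha1⟩ := replicate_exec' ω P3_adj21 k p hp (by rw [hsym 2 1]; exact hkB)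
    have hd1 : IsDistrib (applyList ω (List.replicate k (2, 1)) p) :=
      exec_distrib' ω _ p hp he1
    have hq10 : applyList ω (List.replicate k (2, 1)) p 0 = p 0 := by
      rw [ha1]; simp only [Fin.reduceEq, reduceIte]
    have hq11 : applyList ω (List.replicate k (2, 1)) p 1 = p 1 + k := by
      rw [ha1]; simp only [Fin.reduceEq, reduceIte]
    set j : ℕ := ((p 1 + k) / (ω 0 1 : ℤ)).toNat with hjdef
    have hk0 : (0:ℤ) ≤ (k:ℤ) := by positivity
    have hj : (j:ℤ) = (p 1 + k) / (ω 0 1 : ℤ) :=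
      Int.toNat_of_nonneg (Int.ediv_nonneg (by linarith [hp 1]) (by linarith))
    have hjA : (j:ℤ) * (ω 0 1 : ℤ) ≤ p 1 + k := by
      rw [hj, mul_comm]
      linarith [Int.mul_ediv_add_emod (p 1 + k) ((ω 0 1 : ℤ)),
        Int.emod_nonneg (p 1 + k) (by linarith : ((ω 0 1 : ℤ)) ≠ 0)]
    obtain ⟨he2, ha2⟩ := replicate_exec' ω P3_adj10 j
      (applyList ω (List.replicate k (2, 1)) p) hd1
      (by rw [hsym 1 0, hq11]; exact hjA)
    refine ⟨List.replicate k (2, 1) ++ List.replicate j (1, 0), ?_, ?_⟩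
    · exact exec_append' P3 ω _ _ p he1 he2
    · rw [applyList_append', ha2]
      simp only [Fin.reduceEq, reduceIte]
      rw [hq10]
      have hkey := key_arith' (p 0) (p 1) (p 2) (ω 0 1 : ℤ) (ω 1 2 : ℤ) (t:ℤ)
        (hp 0) (hp 1) (hp 2) hA hB hsum
      rw [hj, hk]
      linarith [hkey]
  refine le_antisymm (Nat.sInf_le hmem) (le_csInf ⟨_, hmem⟩ ?_)
  intro m hm
  by_contra hlt
  push_neg at hlt
  have hcast : (m:ℤ) < (t:ℤ) * (ω 0 1 : ℤ) * (ω 1 2 : ℤ) := by exact_mod_cast hlt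
  set p : Fin 3 → ℤ := fun v => if v = 2 then (m:ℤ) else 0 with hpdef
  have hp : IsDistrib p := by
    intro v; rw [hpdef]; dsimp only; split_ifs <;> positivity
  have hsize : size p = (m:ℤ) := by
    rw [size, Fin.sum_univ_three, hpdef]; simp [Fin.reduceEq]
  obtain ⟨l, hex, hge⟩ := hm p hp hsize
  have hphi := phi_mono' ω hsym hω l p hex
  have hfin := exec_distrib' ω l p hp hex
  have hp0 : p 0 = 0 := by rw [hpdef]; simp [Fin.reduceEq]
  have hp1 : p 1 = 0 := by rw [hpdef]; simp [Fin.reduceEq]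
  have hp2 : p 2 = (m:ℤ) := by rw [hpdef]; simp [Fin.reduceEq]
  rw [hp0, hp1, hp2] at hphi
  have h1 : (ω 0 1 : ℤ) * (ω 1 2 : ℤ) * (t:ℤ)
      ≤ (ω 0 1 : ℤ) * (ω 1 2 : ℤ) * applyList ω l p 0 :=
    mul_le_mul_of_nonneg_left hge (by positivity)
  have h2 : (0:ℤ) ≤ (ω 1 2 : ℤ) * applyList ω l p 1 :=
    mul_nonneg (by linarith) (hfin 1)
  have h3 := hfin 2
  nlinarith [hphi, h1, h2, h3, hcast]
end

section
/- Let G_ω be a weighted graph with goal vertex x, and let p be a pebble distribution of maximum size among all pebble distributions from which x is not reachable (such a maximum exists since G is connected). Then p(u) = 0 for every vertex u that is an inner vertex of a cut ear of G with respect to x. -/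
open Finset

variable {V : Type*}

/-- `v` is a cut vertex of the (connected) graph `G`: deleting `v` disconnects `G`. -/
def IsCutVertex {V : Type*} (G : SimpleGraph V) (v : V) : Prop :=
  ¬(G.induce {w : V | w ≠ v}).Connected

-- ==== my lemmas ====

lemma applyMS_zero [DecidableEq V] (ω : V → V → ℕ) (p : V → ℤ) : applyMS ω 0 p = p := by
  funext w; simp [applyMS]

lemma applyMS_cons [DecidableEq V] (ω : V → V → ℕ) (m : V × V) (S : Multiset (V × V))
    (p : V → ℤ) (hm : m.1 ≠ m.2) :
    applyMS ω (m ::ₘ S) p = applyMS ω S (moveFn ω m p) := by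
  funext u
  simp only [applyMS, moveFn, Multiset.filter_cons]
  by_cases h1 : u = m.1
  · subst h1
    rw [if_neg (fun h => hm h.symm), if_pos rfl, if_pos rfl]
    simp only [Multiset.map_add, Multiset.sum_add, Multiset.map_singleton,
      Multiset.sum_singleton, Multiset.card_add, Multiset.card_zero, zero_add,
      Multiset.map_zero, Multiset.sum_zero]
    ring
  · by_cases h2 : u = m.2
    · subst h2
      rw [if_pos rfl, if_neg (fun h => h1 h.symm), if_neg h1, if_pos rfl]
      simp only [Multiset.map_add, Multiset.card_add, Multiset.card_singleton,
        Multiset.filter_zero, Multiset.map_zero, Multiset.sum_add, Multiset.sum_zero,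
        Multiset.card_zero, zero_add, neg_zero]
      push_cast
      ring
    · rw [if_neg (fun h => h2 h.symm), if_neg (fun h => h1 h.symm), if_neg h1, if_neg h2]
      simp

lemma applyList_eq_applyMS [DecidableEq V] (ω : V → V → ℕ) :
    ∀ (l : List (V × V)) (p : V → ℤ), (∀ m ∈ l, m.1 ≠ m.2) →
      applyList ω l p = applyMS ω (l : Multiset (V × V)) p := by
  intro l
  induction l with
  | nil => intro p _; simp [applyList, applyMS_zero]
  | cons m t ih =>
    intro p h
    rw [show applyList ω (m :: t) p = applyList ω t (moveFn ω m p) from rfl,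
      ih _ (fun m' hm' => h m' (List.mem_cons_of_mem _ hm')),
      show ((m :: t : List (V × V)) : Multiset (V × V)) = m ::ₘ (t : Multiset (V × V)) from rfl,
      applyMS_cons ω m _ p (h m (List.mem_cons_self))]

lemma executable_edges [DecidableEq V] (G : SimpleGraph V) (ω : V → V → ℕ) :
    ∀ (l : List (V × V)) (p : V → ℤ), Executable G ω p l → ∀ m ∈ l, G.Adj m.1 m.2 := by
  intro l
  induction l with
  | nil => intro p _ m hm; cases hm
  | cons a t ih =>
    intro p hex m hm
    obtain ⟨h1, _, h3⟩ := hex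
    rw [List.mem_cons] at hm
    rcases hm with hm | hm
    · exact hm ▸ h1
    · exact ih _ h3 m hm

lemma executable_nonneg [DecidableEq V] (G : SimpleGraph V) (ω : V → V → ℕ) :
    ∀ (l : List (V × V)) (p : V → ℤ), IsDistrib p → Executable G ω p l →
      IsDistrib (applyList ω l p) := by
  intro l
  induction l with
  | nil => intro p hp _; exact hp
  | cons a t ih =>
    intro p _ hex
    obtain ⟨_, h2, h3⟩ := hex
    exact ih _ h2 h3

lemma chain_map_snd :
    ∀ (C : List (V × V)) (h : C ≠ []), List.Chain' (fun a b => a.2 = b.1) C →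
      C.map Prod.snd = C.tail.map Prod.fst ++ [(C.getLast h).snd] := by
  intro C
  induction C with
  | nil => intro h; exact absurd rfl h
  | cons a t ih =>
    intro _ hch
    cases t with
    | nil => simp
    | cons b t2 =>
      have h1 : a.2 = b.1 := (List.isChain_cons_cons.mp hch).1
      have h2 := ih (by simp) (List.isChain_cons_cons.mp hch).2
      simp only [List.map_cons, List.tail_cons] at h2 ⊢
      rw [h2, h1, List.getLast_cons (by simp : (b :: t2 : List (V × V)) ≠ [])]
      simp

lemma chain_closed_perm (C : List (V × V)) (hne : C ≠ [])
    (hch : List.Chain' (fun a b => a.2 = b.1) C)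
    (hcl : C.getLast?.map Prod.snd = C.head?.map Prod.fst) :
    (C.map Prod.snd).Perm (C.map Prod.fst) := by
  obtain ⟨a, t, rfl⟩ : ∃ a t, C = a :: t := by
    cases C with
    | nil => exact absurd rfl hne
    | cons a t => exact ⟨a, t, rfl⟩
  have h1 := chain_map_snd (a :: t) hne hch
  have h2 : ((a :: t).getLast hne).snd = a.1 := by
    rw [List.getLast?_eq_getLast hne] at hcl
    simp only [List.head?_cons, Option.map_some] at hcl
    exact Option.some_injective _ hcl
  rw [h1, h2]
  simp only [List.tail_cons, List.map_cons]
  exact List.perm_append_singleton _ _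

lemma cycle_removal [DecidableEq V] (ω : V → V → ℕ) {S : Multiset (V × V)} {C : List (V × V)}
    (hne : C ≠ []) (hle : (C : Multiset (V × V)) ≤ S)
    (hch : List.Chain' (fun a b => a.2 = b.1) C)
    (hcl : C.getLast?.map Prod.snd = C.head?.map Prod.fst)
    (hω1 : ∀ m ∈ S, 1 ≤ (ω m.1 m.2 : ℤ)) (p : V → ℤ) :
    ∀ u, applyMS ω S p u ≤ applyMS ω (S - (C : Multiset (V × V))) p u := by
  intro u
  obtain ⟨T, rfl⟩ : ∃ T, S = (C : Multiset (V × V)) + T :=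
    ⟨S - (C : Multiset (V × V)), by rw [add_comm]; exact (tsub_add_cancel_of_le hle).symm⟩
  rw [add_tsub_cancel_left]
  simp only [applyMS, Multiset.filter_add, Multiset.card_add, Multiset.map_add,
    Multiset.sum_add]
  have hcards : Multiset.card ((C : Multiset (V × V)).filter (fun m => m.2 = u))
      = Multiset.card ((C : Multiset (V × V)).filter (fun m => m.1 = u)) := by
    have e1 : (C : Multiset (V × V)).filter (fun m => m.2 = u)
        = (C : Multiset (V × V)).filter (fun m => u = m.2) :=
      Multiset.filter_congr (fun x _ => eq_comm)
    have e2 : (C : Multiset (V × V)).filter (fun m => m.1 = u)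
        = (C : Multiset (V × V)).filter (fun m => u = m.1) :=
      Multiset.filter_congr (fun x _ => eq_comm)
    rw [e1, e2, ← Multiset.count_map, ← Multiset.count_map]
    have : (Multiset.map Prod.snd (C : Multiset (V × V)))
        = (Multiset.map Prod.fst (C : Multiset (V × V))) := by
      have := chain_closed_perm C hne hch hcl
      simpa using Multiset.coe_eq_coe.mpr this
    rw [this]
  have key1 : (Multiset.card ((C : Multiset (V × V)).filter (fun m => m.2 = u)) : ℤ)
      ≤ ((Multiset.filter (fun m => m.1 = u) (C : Multiset (V × V))).map
          (fun m => (ω m.1 m.2 : ℤ))).sum := by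
    rw [hcards]
    have h1 : (Multiset.card ((C : Multiset (V × V)).filter (fun m => m.1 = u)) : ℤ)
        = (((C : Multiset (V × V)).filter (fun m => m.1 = u)).map (fun _ => (1 : ℤ))).sum := by
      simp [Multiset.map_const', Multiset.sum_replicate]
    rw [h1]
    apply Multiset.sum_map_le_sum_map
    intro m hm
    have hmC : m ∈ (C : Multiset (V × V)) := Multiset.mem_of_le (Multiset.filter_le _ _) hm
    exact hω1 m (by rw [Multiset.mem_add]; exact Or.inl hmC)
  push_cast
  linarith

lemma build_cycle [DecidableEq V] {S : Multiset (V × V)}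
    (H : ∀ m ∈ S, ∃ m' ∈ S, m'.2 = m.1) :
    ∀ (n : ℕ) (l : List (V × V)), l ≠ [] → l.Nodup → (∀ m ∈ l, m ∈ S) →
      List.Chain' (fun x y => x.2 = y.1) l → Multiset.card S ≤ l.length + n →
      HasCycle S := by
  intro n
  induction n with
  | zero =>
    intro l hne hnd hmem hch hcard
    obtain ⟨a, t, rfl⟩ : ∃ a t, l = a :: t := by
      cases l with
      | nil => exact absurd rfl hne
      | cons a t => exact ⟨a, t, rfl⟩
    obtain ⟨m', hm'S, hm'2⟩ := H a (hmem a (List.mem_cons_self))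
    by_cases hml : m' ∈ a :: t
    · -- produce cycle
      obtain ⟨l1, l2, heq⟩ := List.append_of_mem hml
      have heq2 : a :: t = (l1 ++ [m']) ++ l2 := by rw [heq]; simp
      refine ⟨l1 ++ [m'], by simp, ?_, ?_, ?_⟩
      · rw [Multiset.le_iff_count]
        intro y
        by_cases hy : y ∈ l1 ++ [m']
        · have hnd2 : (l1 ++ [m']).Nodup := by
            have : (l1 ++ [m']).Sublist (a :: t) := heq2 ▸ (l1 ++ [m']).sublist_append_left l2
            exact hnd.sublist this
          have hc1 : Multiset.count y ((l1 ++ [m'] : List (V × V)) : Multiset (V × V)) ≤ 1 :=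
            Multiset.nodup_iff_count_le_one.mp ((Multiset.coe_nodup).mpr hnd2) y
          have hc2 : 1 ≤ Multiset.count y S := by
            rw [Multiset.one_le_count_iff_mem]
            exact hmem y (heq2 ▸ List.mem_append_left l2 hy)
          omega
        · have : Multiset.count y ((l1 ++ [m'] : List (V × V)) : Multiset (V × V)) = 0 :=
            Multiset.count_eq_zero.mpr (by simpa using hy)
          omega
      · rw [heq2] at hch
        exact (List.isChain_append.mp hch).1
      · rw [List.getLast?_concat]
        have hhead : (l1 ++ [m']).head? = some a := by
          cases l1 with
          | nil =>
            have : a = m' := by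
              have := heq
              simp only [List.nil_append] at this
              exact (List.cons_eq_cons.mp this).1
            simp [this]
          | cons u t2 =>
            have : u = a := by
              have := heq
              simp only [List.cons_append] at this
              exact ((List.cons_eq_cons.mp this).1).symm
            simp [this]
        rw [hhead]
        simp [hm'2]
    · -- contradiction with cardinality
      exfalso
      have hsub : ((m' :: a :: t : List (V × V)) : Multiset (V × V)) ≤ S := by
        rw [Multiset.le_iff_count]
        intro y
        by_cases hy : y ∈ m' :: a :: t
        · have hnd2 : (m' :: a :: t).Nodup := List.nodup_cons.mpr ⟨hml, hnd⟩
          have hc1 : Multiset.count y ((m' :: a :: t : List (V × V)) : Multiset (V × V)) ≤ 1 :=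
            Multiset.nodup_iff_count_le_one.mp ((Multiset.coe_nodup).mpr hnd2) y
          have hc2 : 1 ≤ Multiset.count y S := by
            rw [Multiset.one_le_count_iff_mem]
            rw [List.mem_cons] at hy
            rcases hy with hy | hy
            · exact hy ▸ hm'S
            · exact hmem y hy
          omega
        · have : Multiset.count y ((m' :: a :: t : List (V × V)) : Multiset (V × V)) = 0 :=
            Multiset.count_eq_zero.mpr (by simpa using hy)
          omega
      have := Multiset.card_le_card hsub
      simp only [Multiset.coe_card, List.length_cons] at this
      simp only [List.length_cons] at hcard
      omega
  | succ n ih =>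
    intro l hne hnd hmem hch hcard
    obtain ⟨a, t, rfl⟩ : ∃ a t, l = a :: t := by
      cases l with
      | nil => exact absurd rfl hne
      | cons a t => exact ⟨a, t, rfl⟩
    obtain ⟨m', hm'S, hm'2⟩ := H a (hmem a (List.mem_cons_self))
    by_cases hml : m' ∈ a :: t
    · obtain ⟨l1, l2, heq⟩ := List.append_of_mem hml
      have heq2 : a :: t = (l1 ++ [m']) ++ l2 := by rw [heq]; simp
      refine ⟨l1 ++ [m'], by simp, ?_, ?_, ?_⟩
      · rw [Multiset.le_iff_count]
        intro y
        by_cases hy : y ∈ l1 ++ [m']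
        · have hnd2 : (l1 ++ [m']).Nodup := by
            have : (l1 ++ [m']).Sublist (a :: t) := heq2 ▸ (l1 ++ [m']).sublist_append_left l2
            exact hnd.sublist this
          have hc1 : Multiset.count y ((l1 ++ [m'] : List (V × V)) : Multiset (V × V)) ≤ 1 :=
            Multiset.nodup_iff_count_le_one.mp ((Multiset.coe_nodup).mpr hnd2) y
          have hc2 : 1 ≤ Multiset.count y S := by
            rw [Multiset.one_le_count_iff_mem]
            exact hmem y (heq2 ▸ List.mem_append_left l2 hy)
          omega
        · have : Multiset.count y ((l1 ++ [m'] : List (V × V)) : Multiset (V × V)) = 0 :=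
            Multiset.count_eq_zero.mpr (by simpa using hy)
          omega
      · rw [heq2] at hch
        exact (List.isChain_append.mp hch).1
      · rw [List.getLast?_concat]
        have hhead : (l1 ++ [m']).head? = some a := by
          cases l1 with
          | nil =>
            have : a = m' := by
              have := heq
              simp only [List.nil_append] at this
              exact (List.cons_eq_cons.mp this).1
            simp [this]
          | cons u t2 =>
            have : u = a := by
              have := heq
              simp only [List.cons_append] at this
              exact ((List.cons_eq_cons.mp this).1).symm
            simp [this]
        rw [hhead]
        simp [hm'2]
    · apply ih (m' :: a :: t) (by simp) (List.nodup_cons.mpr ⟨hml, hnd⟩)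
      · intro m hm
        rw [List.mem_cons] at hm
        rcases hm with hm | hm
        · exact hm ▸ hm'S
        · exact hmem m hm
      · exact List.isChain_cons_cons.mpr ⟨hm'2, hch⟩
      · simp only [List.length_cons] at hcard ⊢
        omega

lemma exists_initial [DecidableEq V] {S : Multiset (V × V)} (hS : S ≠ 0)
    (hnc : ¬ HasCycle S) : ∃ m ∈ S, ∀ m' ∈ S, m'.2 ≠ m.1 := by
  by_contra hcon
  push_neg at hcon
  apply hnc
  obtain ⟨m0, hm0⟩ := Multiset.exists_mem_of_ne_zero hS
  have hcon' : ∀ m ∈ S, ∃ m' ∈ S, m'.2 = m.1 := by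
    intro m hm
    obtain ⟨m', hm', h⟩ := hcon m hm
    exact ⟨m', hm', h⟩
  exact build_cycle hcon' (Multiset.card S) [m0] (by simp) (by simp)
    (by simpa using hm0) (List.isChain_singleton _) (by simp)

lemma reaches_of_applyMS [DecidableEq V] (G : SimpleGraph V) (ω : V → V → ℕ)
    (hω : ∀ u v : V, G.Adj u v → 1 ≤ ω u v) (x : V) :
    ∀ (n : ℕ) (S : Multiset (V × V)) (p : V → ℤ), Multiset.card S ≤ n →
      (∀ m ∈ S, G.Adj m.1 m.2) → IsDistrib p →
      (∀ u, 0 ≤ applyMS ω S p u) → 1 ≤ applyMS ω S p x → Reaches G ω p x 1 := by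
  intro n
  induction n with
  | zero =>
    intro S p hc _ _ _ hx
    have : S = 0 := Multiset.card_eq_zero.mp (Nat.le_zero.mp hc)
    subst this
    rw [applyMS_zero] at hx
    exact ⟨[], trivial, by exact_mod_cast hx⟩
  | succ n ih =>
    intro S p hc hE hp h0 hx
    rcases eq_or_ne S 0 with rfl | hS
    · rw [applyMS_zero] at hx
      exact ⟨[], trivial, by exact_mod_cast hx⟩
    by_cases hcyc : HasCycle S
    · obtain ⟨C, hC1, hC2, hC3, hC4⟩ := hcyc
      have hω1 : ∀ m ∈ S, 1 ≤ (ω m.1 m.2 : ℤ) := by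
        intro m hm
        exact_mod_cast hω m.1 m.2 (hE m hm)
      have hle := cycle_removal ω hC1 hC2 hC3 hC4 hω1 p
      have hCne : 0 < Multiset.card (C : Multiset (V × V)) := by
        simp only [Multiset.coe_card]
        exact List.length_pos_iff.mpr hC1
      apply ih (S - (C : Multiset (V × V))) p
      · rw [Multiset.card_sub hC2]
        omega
      · intro m hm
        exact hE m (Multiset.mem_of_le (Multiset.sub_le_self _ _) hm)
      · exact hp
      · exact fun u => le_trans (h0 u) (hle u)
      · exact le_trans hx (hle x)
    · obtain ⟨m, hmS, hmin⟩ := exists_initial hS hcyc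
      have hadjm : G.Adj m.1 m.2 := hE m hmS
      have hne : m.1 ≠ m.2 := hadjm.ne
      have key : (ω m.1 m.2 : ℤ) ≤ p m.1 := by
        have h1 := h0 m.1
        simp only [applyMS] at h1
        have harr : S.filter (fun m' => m'.2 = m.1) = 0 :=
          Multiset.filter_eq_nil.mpr (fun a ha => hmin a ha)
        rw [harr] at h1
        simp only [Multiset.card_zero, Nat.cast_zero, add_zero] at h1
        have hmem2 : (ω m.1 m.2 : ℤ) ∈ (S.filter (fun m' => m'.1 = m.1)).map
            (fun m' => (ω m'.1 m'.2 : ℤ)) :=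
          Multiset.mem_map_of_mem _ (Multiset.mem_filter.mpr ⟨hmS, rfl⟩)
        have := Multiset.single_le_sum (fun y hy => by
          obtain ⟨z, _, rfl⟩ := Multiset.mem_map.mp hy
          positivity) _ hmem2
        linarith
      have hmove : ∀ u, 0 ≤ moveFn ω m p u := by
        intro u
        simp only [moveFn]
        split_ifs with h1 h2
        · linarith
        · linarith [hp m.2]
        · exact hp u
      have heq : applyMS ω S p = applyMS ω (S.erase m) (moveFn ω m p) := by
        conv_lhs => rw [← Multiset.cons_erase hmS]
        exact applyMS_cons ω m _ p hne
      have hrec := ih (S.erase m) (moveFn ω m p)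
        (by
          have hpos : 0 < Multiset.card S := Multiset.card_pos.mpr hS
          rw [Multiset.card_erase_of_mem hmS, Nat.pred_eq_sub_one]
          omega)
        (fun m' hm' => hE m' (Multiset.mem_of_mem_erase hm'))
        hmove
        (fun u => heq ▸ h0 u)
        (heq ▸ hx)
      obtain ⟨l, hl1, hl2⟩ := hrec
      exact ⟨m :: l, ⟨hadjm, hmove, hl1⟩, hl2⟩


lemma walk_side_aux (G : SimpleGraph V) {v a b : V} (hnb : G.neighborSet v = {a, b})
    (ha : a ≠ v) (hb : b ≠ v) :
    ∀ {u u' : V} (_W : G.Walk u u') (hu : u ≠ v) (hu' : u' ≠ v),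
      (G.induce {y : V | y ≠ v}).Reachable ⟨u, hu⟩ ⟨u', hu'⟩ ∨
      (G.induce {y : V | y ≠ v}).Reachable ⟨u, hu⟩ ⟨a, ha⟩ ∨
      (G.induce {y : V | y ≠ v}).Reachable ⟨u, hu⟩ ⟨b, hb⟩ := by
  intro u u' W
  induction W with
  | nil => intro hu hu'; exact Or.inl (SimpleGraph.Reachable.refl _)
  | @cons p q r h W ih =>
    intro hu hu'
    by_cases hc : q = v
    · subst hc
      have hmem : p ∈ G.neighborSet q := SimpleGraph.mem_neighborSet _ _ _ |>.mpr h.symm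
      rw [hnb] at hmem
      rcases hmem with rfl | rfl
      · exact Or.inr (Or.inl (SimpleGraph.Reachable.refl _))
      · exact Or.inr (Or.inr (SimpleGraph.Reachable.refl _))
    · have hadj' : (G.induce {y : V | y ≠ v}).Adj ⟨p, hu⟩ ⟨q, hc⟩ := h
      rcases ih hc hu' with hr | hr | hr
      · exact Or.inl (hadj'.reachable.trans hr)
      · exact Or.inr (Or.inl (hadj'.reachable.trans hr))
      · exact Or.inr (Or.inr (hadj'.reachable.trans hr))

lemma side_choice (G : SimpleGraph V) (hG : G.Connected) {v a b : V}
    (hnb : G.neighborSet v = {a, b}) (hnc : ¬(G.induce {y : V | y ≠ v}).Connected)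
    (ha : a ≠ v) (hb : b ≠ v) :
    ¬(G.induce {y : V | y ≠ v}).Reachable ⟨a, ha⟩ ⟨b, hb⟩ := by
  intro hab
  apply hnc
  have key : ∀ (u : V) (hu : u ≠ v), (G.induce {y : V | y ≠ v}).Reachable ⟨u, hu⟩ ⟨a, ha⟩ := by
    intro u hu
    obtain ⟨W⟩ := hG.preconnected u a
    rcases walk_side_aux G hnb ha hb W hu ha with h | h | h
    · exact h
    · exact h
    · exact h.trans hab.symm
  haveI : Nonempty ({y : V | y ≠ v} : Set V) := ⟨⟨a, ha⟩⟩
  exact ⟨fun y z => (key y.1 y.2).trans (key z.1 z.2).symm⟩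


lemma core_cut [Fintype V] [DecidableEq V] (G : SimpleGraph V)
    (ω : V → V → ℕ) (hω : ∀ u v : V, G.Adj u v → 2 ≤ ω u v)
    (x : V) (p : V → ℤ) (hp : IsDistrib p) (hnr : ¬Reaches G ω p x 1)
    (hmaxsize : ∀ q : V → ℤ, IsDistrib q → ¬Reaches G ω q x 1 → size q ≤ size p)
    (v aa bb : V) (hnb : G.neighborSet v = {aa, bb})
    (haa : aa ≠ v) (hbb : bb ≠ v) (hxv : x ≠ v)
    (hax : ¬(G.induce {y : V | y ≠ v}).Reachable ⟨aa, haa⟩ ⟨x, hxv⟩)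
    (hab : ¬(G.induce {y : V | y ≠ v}).Reachable ⟨aa, haa⟩ ⟨bb, hbb⟩) :
    p v = 0 := by
  classical
  have h0 := hp v
  by_contra hne0
  have h1 : 1 ≤ p v := by omega
  have hAdjva : G.Adj v aa := by
    rw [← SimpleGraph.mem_neighborSet, hnb]; exact Set.mem_insert _ _
  have hAdjav : G.Adj aa v := hAdjva.symm
  set c : ℤ := (ω aa v : ℤ) with hcdef
  have hc2 : (2 : ℤ) ≤ c := by rw [hcdef]; exact_mod_cast hω aa v hAdjav
  set q : V → ℤ := fun u => p u + (if u = aa then c else 0) - (if u = v then 1 else 0) with hq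
  have hqa : q aa = p aa + c := by simp [hq, haa]
  have hqv : q v = p v - 1 := by
    have : v ≠ aa := fun h => haa h.symm
    simp [hq, this]
  have hqo : ∀ u, u ≠ aa → u ≠ v → q u = p u := by
    intro u hua huv; simp [hq, hua, huv]
  have hqd : IsDistrib q := by
    intro u
    by_cases hua : u = aa
    · rw [hua, hqa]; have := hp aa; linarith
    · by_cases huv : u = v
      · rw [huv, hqv]; linarith
      · rw [hqo u hua huv]; exact hp u
  have hsize : size p < size q := by
    have hs1 : ∑ u, (if u = aa then c else 0) = c := by
      rw [Finset.sum_ite_eq']; simp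
    have hs2 : ∑ u, (if u = v then (1:ℤ) else 0) = 1 := by
      rw [Finset.sum_ite_eq']; simp
    have : size q = size p + c - 1 := by
      simp only [size, hq]
      rw [Finset.sum_sub_distrib, Finset.sum_add_distrib, hs1, hs2]
    rw [this]; linarith
  have hqreach : Reaches G ω q x 1 := by
    by_contra h
    have := hmaxsize q hqd h
    linarith
  obtain ⟨l, hex, hx1⟩ := hqreach
  have hedges : ∀ m ∈ l, G.Adj m.1 m.2 := executable_edges G ω l q hex
  have hnn : IsDistrib (applyList ω l q) := executable_nonneg G ω l q hqd hex
  have hMS : applyList ω l q = applyMS ω (l : Multiset (V × V)) q :=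
    applyList_eq_applyMS ω l q (fun m hm => (hedges m hm).ne)
  set S : Multiset (V × V) := (l : Multiset (V × V)) with hSdef
  have hedgesS : ∀ m ∈ S, G.Adj m.1 m.2 := by
    intro m hm
    exact hedges m (by rwa [hSdef, Multiset.mem_coe] at hm)
  have hω1 : ∀ u u' : V, G.Adj u u' → 1 ≤ ω u u' := fun u u' h =>
    le_trans one_le_two (hω u u' h)
  have hfin0 : ∀ u, 0 ≤ applyMS ω S q u := by
    intro u; rw [hSdef, ← hMS]; exact hnn u
  have hfinx : 1 ≤ applyMS ω S q x := by
    rw [hSdef, ← hMS]; exact_mod_cast hx1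
  apply hnr
  by_cases hms : (aa, v) ∈ S
  · have hmove : moveFn ω (aa, v) q = p := by
      funext u
      simp only [moveFn]
      split_ifs with hu1 hu2
      · subst hu1; rw [hqa]; simp [hcdef]
      · subst hu2; rw [hqv]; ring
      · exact hqo u hu1 hu2
    have hkey : applyMS ω S q = applyMS ω (S.erase (aa, v)) p := by
      conv_lhs => rw [← Multiset.cons_erase hms]
      rw [applyMS_cons ω (aa, v) _ q haa, hmove]
    exact reaches_of_applyMS G ω hω1 x (Multiset.card (S.erase (aa, v))) _ p le_rfl
      (fun m hm => hedgesS m (Multiset.mem_of_mem_erase hm)) hp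
      (fun u => hkey ▸ hfin0 u) (hkey ▸ hfinx)
  · set A : Set V :=
      {y : V | ∃ h : y ≠ v, (G.induce {z : V | z ≠ v}).Reachable ⟨aa, haa⟩ ⟨y, h⟩} with hAdef
    have hAaa : aa ∈ A := ⟨haa, SimpleGraph.Reachable.refl _⟩
    have hAv : v ∉ A := fun h => h.1 rfl
    have hAx : x ∉ A := fun h => hax h.2
    have hAbb : bb ∉ A := fun h => hab h.2
    have hAclosed : ∀ s t : V, G.Adj s t → s ∈ A → t ≠ v → t ∈ A := by
      intro s t hst hs ht
      exact ⟨ht, hs.2.trans (SimpleGraph.Adj.reachable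
        (show (G.induce {z : V | z ≠ v}).Adj ⟨s, hs.1⟩ ⟨t, ht⟩ from hst))⟩
    set S' : Multiset (V × V) := S.filter (fun m => m.1 ∉ A) with hS'
    have hedgesS' : ∀ m ∈ S', G.Adj m.1 m.2 := fun m hm =>
      hedgesS m (Multiset.mem_of_le (Multiset.filter_le _ _) hm)
    have harr : ∀ u : V, u ∉ A →
        Multiset.filter (fun m => m.2 = u) S' = Multiset.filter (fun m => m.2 = u) S := by
      intro u hu
      rw [hS', Multiset.filter_filter]
      refine Multiset.filter_congr ?_
      intro m hm
      constructor
      · rintro ⟨h2, _⟩; exact h2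
      · intro h2
        refine ⟨h2, fun hmA => ?_⟩
        by_cases huv : u = v
        · have hadj2 : m.1 ∈ G.neighborSet v := by
            rw [SimpleGraph.mem_neighborSet]
            have hA2 := hedgesS m hm
            have hA3 : G.Adj m.1 v := by rw [← huv, ← h2]; exact hA2
            exact hA3.symm
          rw [hnb] at hadj2
          rcases hadj2 with h3 | h3
          · apply hms
            have hmeq : m = (aa, v) := Prod.ext h3 (by rw [h2, huv])
            rwa [hmeq] at hm
          · rw [Set.mem_singleton_iff] at h3
            exact hAbb (h3 ▸ hmA)
        · have hm2v : m.2 ≠ v := fun h => huv (by rw [← h2, h])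
          apply hu
          have hcl := hAclosed m.1 m.2 (hedgesS m hm) hmA hm2v
          rwa [h2] at hcl
    have hdep : ∀ u : V, u ∉ A →
        Multiset.filter (fun m => m.1 = u) S' = Multiset.filter (fun m => m.1 = u) S := by
      intro u hu
      rw [hS', Multiset.filter_filter]
      refine Multiset.filter_congr ?_
      intro m _
      constructor
      · rintro ⟨h1, _⟩; exact h1
      · intro h1; exact ⟨h1, by rw [h1]; exact hu⟩
    have hdepA : ∀ u : V, u ∈ A → Multiset.filter (fun m => m.1 = u) S' = 0 := by
      intro u hu
      rw [hS', Multiset.filter_filter]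
      rw [Multiset.filter_eq_nil]
      rintro m _ ⟨h1, h2⟩
      exact h2 (h1 ▸ hu)
    have hval : ∀ u : V, u ∉ A →
        applyMS ω S' p u = applyMS ω S q u + (if u = v then 1 else 0) := by
      intro u hu
      simp only [applyMS]
      rw [harr u hu, hdep u hu]
      by_cases huv : u = v
      · rw [huv, hqv, if_pos rfl]; ring
      · have hua : u ≠ aa := fun h => hu (h ▸ hAaa)
        rw [hqo u hua huv, if_neg huv, add_zero]
    have hfin0' : ∀ u, 0 ≤ applyMS ω S' p u := by
      intro u
      by_cases hu : u ∈ A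
      · simp only [applyMS]
        rw [hdepA u hu]
        simp only [Multiset.map_zero, Multiset.sum_zero, sub_zero]
        have h2 : (0:ℤ) ≤ (Multiset.card (Multiset.filter (fun m => m.2 = u) S') : ℤ) :=
          Int.natCast_nonneg _
        have := hp u
        linarith
      · rw [hval u hu]
        have := hfin0 u
        split_ifs <;> linarith
    have hfinx' : 1 ≤ applyMS ω S' p x := by
      rw [hval x hAx, if_neg hxv, add_zero]
      exact hfinx
    exact reaches_of_applyMS G ω hω1 x (Multiset.card S') S' p le_rfl hedgesS' hp hfin0' hfinx'


/-- Let `p` be a pebble distribution of maximum size among all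
distributions from which the goal vertex `x` is not reachable. Then `p` has no pebbles
on the inner vertices of any cut ear: here the cut ear is given by consecutive vertices
`w 0, w 1, …, w (k+1)` with inner vertices `w 1, …, w k`, which have degree `2`, are
different from `x`, are cut vertices of `G`, and the thread is maximal. -/
theorem statement10 {V : Type*} [Fintype V] [DecidableEq V]
    (G : SimpleGraph V) (hG : G.Connected)
    (ω : V → V → ℕ) (hsym : ∀ u v : V, ω u v = ω v u)
    (hω : ∀ u v : V, G.Adj u v → 2 ≤ ω u v)
    (x : V) (p : V → ℤ) (hp : IsDistrib p) (hnr : ¬Reaches G ω p x 1)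
    (hmaxsize : ∀ q : V → ℤ, IsDistrib q → ¬Reaches G ω q x 1 → size q ≤ size p)
    (k : ℕ) (hk : 1 ≤ k) (w : Fin (k + 2) → V) (hinj : Function.Injective w)
    (hadj : ∀ i : Fin (k + 1), G.Adj (w i.castSucc) (w i.succ))
    (hnotx : ∀ i : Fin (k + 2), i ≠ 0 → i ≠ Fin.last (k + 1) → w i ≠ x)
    (hdeg : ∀ i : Fin (k + 2), i ≠ 0 → i ≠ Fin.last (k + 1) →
      G.neighborSet (w i) = {w (i - 1), w (i + 1)})
    (hcut : ∀ i : Fin (k + 2), i ≠ 0 → i ≠ Fin.last (k + 1) → IsCutVertex G (w i))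
    (hmax0 : w 0 = x ∨ ¬∃ a b : V, a ≠ b ∧ G.neighborSet (w 0) = {a, b})
    (hmaxl : w (Fin.last (k + 1)) = x ∨
      ¬∃ a b : V, a ≠ b ∧ G.neighborSet (w (Fin.last (k + 1))) = {a, b}) :
    ∀ i : Fin (k + 2), i ≠ 0 → i ≠ Fin.last (k + 1) → p (w i) = 0 := by
  intro i hi0 hil
  classical
  have hxv' : w i ≠ x := hnotx i hi0 hil
  have hnbhd := hdeg i hi0 hil
  have hA : G.Adj (w i) (w (i - 1)) := by
    rw [← SimpleGraph.mem_neighborSet, hnbhd]; exact Set.mem_insert _ _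
  have hB : G.Adj (w i) (w (i + 1)) := by
    rw [← SimpleGraph.mem_neighborSet, hnbhd]
    exact Set.mem_insert_of_mem _ rfl
  have ha0 : w (i - 1) ≠ w i := hA.ne'
  have hb0 : w (i + 1) ≠ w i := hB.ne'
  have hxne : x ≠ w i := fun h => hxv' h.symm
  have hncon : ¬(G.induce {y : V | y ≠ w i}).Connected := hcut i hi0 hil
  have hnab : ¬(G.induce {y : V | y ≠ w i}).Reachable ⟨w (i - 1), ha0⟩ ⟨w (i + 1), hb0⟩ :=
    side_choice G hG hnbhd hncon ha0 hb0
  by_cases hside : (G.induce {y : V | y ≠ w i}).Reachable ⟨w (i - 1), ha0⟩ ⟨x, hxne⟩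
  · have hnb2 : G.neighborSet (w i) = {w (i + 1), w (i - 1)} := by
      rw [hnbhd, Set.pair_comm]
    have hbx : ¬(G.induce {y : V | y ≠ w i}).Reachable ⟨w (i + 1), hb0⟩ ⟨x, hxne⟩ := by
      intro h
      exact hnab (hside.trans h.symm)
    have hba : ¬(G.induce {y : V | y ≠ w i}).Reachable ⟨w (i + 1), hb0⟩ ⟨w (i - 1), ha0⟩ :=
      fun h => hnab h.symm
    exact core_cut G ω hω x p hp hnr hmaxsize (w i) (w (i + 1)) (w (i - 1))
      hnb2 hb0 ha0 hxne hbx hba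
  · exact core_cut G ω hω x p hp hnr hmaxsize (w i) (w (i - 1)) (w (i + 1))
      hnbhd ha0 hb0 hxne hside hnab
end
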